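/- If a semigroup S is right pseudo-finite, then the monoid S^1 obtained by adjoining an identity is right pseudo-finite. -/

import Mathlib

def sStep {S : Type*} [Semigroup S] (X : Set S) (a b : S) : Prop :=
  ∃ x ∈ X, ∃ y ∈ X, (a = x ∧ b = y) ∨ ∃ s : S, a = x * s ∧ b = y * s

def seqN {α : Type*} (r : α → α → Prop) : ℕ → α → α → Prop
  | 0, a, b => a = b
  | n + 1, a, b => ∃ c, r a c ∧ seqN r n c b

def RightPseudoFinite (S : Type*) [Semigroup S] : Prop :=
  ∃ X : Finset S, ∃ N : ℕ, ∀ a b : S, ∃ n ≤ N, seqN (sStep (X : Set S)) n a b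

lemma sStep_mono {S : Type*} [Semigroup S] {X Y : Set S} (h : X ⊆ Y) {a b : S}
    (hs : sStep X a b) : sStep Y a b := by
  obtain ⟨x, hx, y, hy, hc⟩ := hs
  exact ⟨x, h hx, y, h hy, hc⟩

lemma seqN_mono {α : Type*} {r r' : α → α → Prop} (h : ∀ a b, r a b → r' a b) :
    ∀ n a b, seqN r n a b → seqN r' n a b := by
  intro n
  induction n with
  | zero => intro a b hab; exact hab
  | succ n ih =>
    rintro a b ⟨c, hc, hcb⟩
    exact ⟨c, h a c hc, ih c b hcb⟩

lemma seqN_snoc {α : Type*} {r : α → α → Prop} :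
    ∀ n a c b, seqN r n a c → r c b → seqN r (n + 1) a b := by
  intro n
  induction n with
  | zero => intro a c b hac hcb; cases hac; exact ⟨b, hcb, rfl⟩
  | succ n ih =>
    rintro a c b ⟨d, had, hdc⟩ hcb
    exact ⟨d, had, ih d c b hdc hcb⟩

lemma sStep_lift {S : Type*} [Semigroup S] {Y : Set S} {X' : Set (WithOne S)}
    (hsub : ∀ x ∈ Y, (↑x : WithOne S) ∈ X') {a b : S}
    (hs : sStep Y a b) : sStep X' (↑a) (↑b) := by
  obtain ⟨x, hx, y, hy, hc | ⟨s, hs1, hs2⟩⟩ := hs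
  · exact ⟨↑x, hsub x hx, ↑y, hsub y hy, Or.inl ⟨by rw [hc.1], by rw [hc.2]⟩⟩
  · exact ⟨↑x, hsub x hx, ↑y, hsub y hy, Or.inr ⟨↑s,
      by rw [hs1, WithOne.coe_mul], by rw [hs2, WithOne.coe_mul]⟩⟩

/-- If a semigroup `S` is right pseudo-finite, then so is the monoid `S¹ = WithOne S`
obtained by adjoining an identity. -/
theorem rightPseudoFinite_withOne {S : Type*} [Semigroup S]
    (h : RightPseudoFinite S) : RightPseudoFinite (WithOne S) := by
  classical
  obtain ⟨X, N, hX⟩ := h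
  rcases isEmpty_or_nonempty S with hS | ⟨⟨u⟩⟩
  · refine ⟨{1}, 0, fun a b => ⟨0, le_refl 0, ?_⟩⟩
    have h1 : ∀ c : WithOne S, c = 1 := by
      intro c
      induction c using WithOne.cases_on
      · rfl
      · exact fun x => (hS.false x).elim
    rw [h1 a, h1 b]; rfl
  · -- enlarge X to contain u
    set Y : Finset S := insert u X with hYdef
    have hXY : (X : Set S) ⊆ (Y : Set S) := by
      intro x hx; simp [hYdef]; right; exact_mod_cast hx
    have hY : ∀ a b : S, ∃ n ≤ N, seqN (sStep (Y : Set S)) n a b := by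
      intro a b
      obtain ⟨n, hn, hseq⟩ := hX a b
      exact ⟨n, hn, seqN_mono (fun a b => sStep_mono hXY) n a b hseq⟩
    have huY : u ∈ Y := Finset.mem_insert_self u X
    set X' : Finset (WithOne S) := insert 1 (Y.image (fun s => (↑s : WithOne S))) with hX'def
    have h1X' : (1 : WithOne S) ∈ (X' : Set (WithOne S)) := by simp [hX'def]
    have hsub : ∀ x ∈ (Y : Set S), (↑x : WithOne S) ∈ (X' : Set (WithOne S)) := by
      intro x hx; simp [hX'def]; exact_mod_cast hx
    have huX' : (↑u : WithOne S) ∈ (X' : Set (WithOne S)) := hsub u (by exact_mod_cast huY)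
    have hlift : ∀ n (a b : S), seqN (sStep (Y : Set S)) n a b →
        seqN (sStep (X' : Set (WithOne S))) n (↑a) (↑b) := by
      intro n
      induction n with
      | zero => intro a b hab; cases hab; rfl
      | succ n ih =>
        rintro a b ⟨c, hc, hcb⟩
        exact ⟨↑c, sStep_lift hsub hc, ih c b hcb⟩
    refine ⟨X', N + 1, fun a b => ?_⟩
    induction a using WithOne.cases_on
    · induction b using WithOne.cases_on
      · exact ⟨0, Nat.zero_le _, rfl⟩
      · intro q
        obtain ⟨n, hn, hseq⟩ := hY u q
        refine ⟨n + 1, by omega, ⟨↑u, ⟨1, h1X', ↑u, huX', Or.inl ⟨rfl, rfl⟩⟩, hlift n u q hseq⟩⟩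
    · intro p
      induction b using WithOne.cases_on
      · obtain ⟨n, hn, hseq⟩ := hY p u
        exact ⟨n + 1, by omega, seqN_snoc n _ (↑u) _ (hlift n p u hseq)
          ⟨↑u, huX', 1, h1X', Or.inl ⟨rfl, rfl⟩⟩⟩
      · intro q
        obtain ⟨n, hn, hseq⟩ := hY p q
        exact ⟨n, by omega, hlift n p q hseq⟩
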